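/- arXiv:1807.06304 — 3 statements merged into one kernel-verified Lean document; each statement's English description precedes it below -/
import Mathlib

section
/- Let h(x) = Σ_{k ∈ K} h_k e^{i⟨k,ω⟩x} be a finite trigonometric sum with K ⊆ ℤ^d \ {0} symmetric (k ∈ K ⟺ -k ∈ K) and e^{i⟨k,ω⟩α} ≠ 1 for all k ∈ K. Suppose h satisfies h(-x-α) = h(x) for all x, equivalently h_k = h_{-k} e^{i⟨k,ω⟩α} for all k ∈ K. Then the solution l(x) = Σ_{k ∈ K} (h_k/(e^{i⟨k,ω⟩α}-1)) e^{i⟨k,ω⟩x} of the difference equation l(x+α)-l(x)=h(x) is odd: l(-x) = -l(x) for all x ∈ ℝ. -/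
theorem stmt_3 (d : ℕ) (ω : Fin d → ℝ) (α : ℝ) (K : Finset (Fin d → ℤ))
    (hc : (Fin d → ℤ) → ℂ)
    (hK0 : ∀ k ∈ K, k ≠ 0)
    (hKsym : ∀ k, k ∈ K ↔ -k ∈ K)
    (hnr : ∀ k ∈ K,
      Complex.exp (Complex.I * ((∑ i, (k i : ℝ) * ω i : ℝ) : ℂ) * (α : ℂ)) ≠ 1)
    (hsym : ∀ k ∈ K, hc k =
      hc (-k) * Complex.exp (Complex.I * ((∑ i, (k i : ℝ) * ω i : ℝ) : ℂ) * (α : ℂ)))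
    (l : ℝ → ℂ)
    (hl : ∀ x : ℝ, l x = ∑ k ∈ K,
      hc k / (Complex.exp (Complex.I * ((∑ i, (k i : ℝ) * ω i : ℝ) : ℂ) * (α : ℂ)) - 1)
        * Complex.exp (Complex.I * ((∑ i, (k i : ℝ) * ω i : ℝ) : ℂ) * (x : ℂ))) :
    ∀ x : ℝ, l (-x) = -l x := by
  intro x
  have hSneg : ∀ k : Fin d → ℤ, ((∑ i, ((-k) i : ℝ) * ω i : ℝ) : ℂ)
      = -((∑ i, (k i : ℝ) * ω i : ℝ) : ℂ) := by
    intro k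
    have : (∑ i, ((-k) i : ℝ) * ω i) = -∑ i, (k i : ℝ) * ω i := by
      rw [← Finset.sum_neg_distrib]
      refine Finset.sum_congr rfl ?_
      intro i _
      simp [Pi.neg_apply]
    rw [this]
    push_cast
    ring
  rw [hl, hl, ← Finset.sum_neg_distrib]
  refine Finset.sum_nbij' (fun k => -k) (fun k => -k) ?_ ?_ ?_ ?_ ?_
  · intro k hk; exact (hKsym k).mp hk
  · intro k hk; exact (hKsym (-k)).mpr (by simpa using hk)
  · intro k hk; simp
  · intro k hk; simp
  · intro k hk
    have hE := hnr k hk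
    have hEne : Complex.exp (Complex.I * ((∑ i, (k i : ℝ) * ω i : ℝ) : ℂ) * (α : ℂ)) ≠ 0 :=
      Complex.exp_ne_zero _
    set S : ℂ := ((∑ i, (k i : ℝ) * ω i : ℝ) : ℂ) with hS
    have h1 : ((∑ i, ((-k) i : ℝ) * ω i : ℝ) : ℂ) = -S := hSneg k
    have h2 : hc (-k) = hc k / Complex.exp (Complex.I * S * α) := by
      rw [hsym k hk]
      exact (mul_div_cancel_right₀ _ hEne).symm
    rw [h1, h2]
    have hexp : Complex.exp (Complex.I * -S * α) = (Complex.exp (Complex.I * S * α))⁻¹ := by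
      rw [← Complex.exp_neg]; ring_nf
    have hexp2 : Complex.exp (Complex.I * -S * (x : ℂ)) = Complex.exp (Complex.I * S * ((-x : ℝ) : ℂ)) := by
      push_cast; ring_nf
    rw [hexp, hexp2]
    have h3 : (Complex.exp (Complex.I * S * α))⁻¹ - 1 ≠ 0 := by
      intro h
      apply hE
      have h4 : (Complex.exp (Complex.I * S * α))⁻¹ = 1 := by linear_combination h
      have := congrArg (· * Complex.exp (Complex.I * S * α)) h4
      simpa [inv_mul_cancel₀ hEne] using this.symm
    have hEne1 : Complex.exp (Complex.I * S * α) - 1 ≠ 0 := sub_ne_zero.mpr hE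
    have h5 : (1 : ℂ) - Complex.exp (Complex.I * S * α) ≠ 0 := sub_ne_zero.mpr hE.symm
    field_simp
    ring
end

section
/- Let h(x) = Σ_{k ∈ K} h_k e^{i⟨k,ω⟩x} be a finite trigonometric sum with K ⊆ ℤ^d \ {0} symmetric and e^{i⟨k,ω⟩α} ≠ 1 for all k ∈ K. Suppose h satisfies h(-x-α) = -h(x) for all x, equivalently h_k = -h_{-k} e^{i⟨k,ω⟩α}. Then l(x) = Σ_{k ∈ K} (h_k/(e^{i⟨k,ω⟩α}-1)) e^{i⟨k,ω⟩x} is even: l(-x) = l(x) for all x ∈ ℝ. -/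
theorem stmt_4 (d : ℕ) (ω : Fin d → ℝ) (α : ℝ) (K : Finset (Fin d → ℤ))
    (hc : (Fin d → ℤ) → ℂ)
    (hK0 : ∀ k ∈ K, k ≠ 0)
    (hKsym : ∀ k, k ∈ K ↔ -k ∈ K)
    (hnr : ∀ k ∈ K,
      Complex.exp (Complex.I * ((∑ i, (k i : ℝ) * ω i : ℝ) : ℂ) * (α : ℂ)) ≠ 1)
    (hsym : ∀ k ∈ K, hc k =
      (-hc (-k)) * Complex.exp (Complex.I * ((∑ i, (k i : ℝ) * ω i : ℝ) : ℂ) * (α : ℂ)))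
    (l : ℝ → ℂ)
    (hl : ∀ x : ℝ, l x = ∑ k ∈ K,
      hc k / (Complex.exp (Complex.I * ((∑ i, (k i : ℝ) * ω i : ℝ) : ℂ) * (α : ℂ)) - 1)
        * Complex.exp (Complex.I * ((∑ i, (k i : ℝ) * ω i : ℝ) : ℂ) * (x : ℂ))) :
    ∀ x : ℝ, l (-x) = l x := by
  intro x
  rw [hl, hl]
  have hS : ∀ k : Fin d → ℤ, ((∑ i, ((-k) i : ℝ) * ω i : ℝ) : ℂ)
      = -((∑ i, (k i : ℝ) * ω i : ℝ) : ℂ) := by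
    intro k
    push_cast
    simp [neg_mul, Finset.sum_neg_distrib]
  refine Finset.sum_equiv (Equiv.neg _) (fun k => by simpa using hKsym k) ?_
  intro k hk
  simp only [Equiv.neg_apply, hS k]
  set S : ℂ := ((∑ i, (k i : ℝ) * ω i : ℝ) : ℂ) with hSdef
  have hE : Complex.exp (Complex.I * -S * (α : ℂ)) =
      (Complex.exp (Complex.I * S * (α : ℂ)))⁻¹ := by
    rw [← Complex.exp_neg]; ring_nf
  have hEx : Complex.exp (Complex.I * -S * (x : ℂ)) =
      Complex.exp (Complex.I * S * ((-x : ℝ) : ℂ)) := by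
    push_cast; ring_nf
  set e : ℂ := Complex.exp (Complex.I * S * (α : ℂ)) with hedef
  have he0 : e ≠ 0 := Complex.exp_ne_zero _
  have he1 : e ≠ 1 := hnr k hk
  have hmk : -k ∈ K := (hKsym k).mp hk
  have hcm : hc (-k) = -hc k * e⁻¹ := by
    have h1 : hc k = -hc (-k) * e := hsym k hk
    rw [h1]
    field_simp
  rw [hE, hEx, hcm]
  have hinv1 : e⁻¹ - 1 ≠ 0 := by
    intro h
    have h2 : e⁻¹ = 1 := by linear_combination h
    exact he1 (by simpa [inv_eq_one] using h2)
  congr 1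
  rw [div_eq_div_iff (sub_ne_zero.mpr he1) hinv1]
  field_simp
  ring
end

section
/- Let φ : ℝ → ℝ be a bounded continuous odd function with lim_{x→+∞} φ(x) = φ(+∞) ∈ ℝ. Define J(ρ) = (1/(2πρ)) ∫_0^{2π} φ(ρ sin ξ) sin ξ dξ for ρ > 0. Then lim_{ρ→+∞} ρ J(ρ) = (2/π) φ(+∞). -/
open Filter Real MeasureTheory

lemma abs_sin_int : ∫ ξ in (0:ℝ)..(2 * π), |Real.sin ξ| = 4 := by
  have hπ := Real.pi_pos
  have h1 : IntervalIntegrable (fun ξ => |Real.sin ξ|) volume 0 π :=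
    (Real.continuous_sin.abs).intervalIntegrable _ _
  have h2 : IntervalIntegrable (fun ξ => |Real.sin ξ|) volume π (2 * π) :=
    (Real.continuous_sin.abs).intervalIntegrable _ _
  rw [← intervalIntegral.integral_add_adjacent_intervals h1 h2]
  have e1 : ∫ ξ in (0:ℝ)..π, |Real.sin ξ| = ∫ ξ in (0:ℝ)..π, Real.sin ξ := by
    apply intervalIntegral.integral_congr
    intro x hx
    rw [Set.uIcc_of_le Real.pi_nonneg] at hx
    exact abs_of_nonneg (Real.sin_nonneg_of_nonneg_of_le_pi hx.1 hx.2)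
  have e2 : ∫ ξ in π..(2 * π), |Real.sin ξ| = ∫ ξ in π..(2 * π), -Real.sin ξ := by
    apply intervalIntegral.integral_congr
    intro x hx
    rw [Set.uIcc_of_le (by linarith : π ≤ 2 * π)] at hx
    have h0 : 0 ≤ Real.sin (x - π) :=
      Real.sin_nonneg_of_nonneg_of_le_pi (by linarith [hx.1]) (by linarith [hx.2])
    rw [Real.sin_sub, Real.sin_pi, Real.cos_pi] at h0
    exact abs_of_nonpos (by linarith)
  rw [e1, e2, intervalIntegral.integral_neg, integral_sin, integral_sin]
  rw [Real.cos_pi, Real.cos_zero, Real.cos_two_pi]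
  ring

open Filter Real in
theorem stmt_10 (φ : ℝ → ℝ) (hcont : Continuous φ)
    (hbdd : ∃ C : ℝ, ∀ x : ℝ, |φ x| ≤ C)
    (hodd : ∀ x : ℝ, φ (-x) = -φ x)
    (φinf : ℝ) (hlim : Tendsto φ atTop (nhds φinf))
    (J : ℝ → ℝ)
    (hJ : ∀ ρ : ℝ, 0 < ρ →
      J ρ = (1 / (2 * π * ρ)) * ∫ ξ in (0:ℝ)..(2 * π), φ (ρ * Real.sin ξ) * Real.sin ξ) :
    Tendsto (fun ρ : ℝ => ρ * J ρ) atTop (nhds ((2 / π) * φinf)) := by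
  obtain ⟨C, hC⟩ := hbdd
  have hπ := Real.pi_pos
  have h02 : (0:ℝ) ≤ 2 * π := by linarith
  have hlim_bot : Tendsto φ atBot (nhds (-φinf)) := by
    have h := (hlim.comp tendsto_neg_atBot_atTop).neg
    refine h.congr fun x => ?_
    simp only [Function.comp_apply]
    rw [← hodd]; ring_nf
  have key : Tendsto
      (fun ρ => ∫ ξ in Set.Ioc (0:ℝ) (2 * π), φ (ρ * Real.sin ξ) * Real.sin ξ) atTop
      (nhds (∫ ξ in Set.Ioc (0:ℝ) (2 * π), φinf * |Real.sin ξ|)) := by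
    apply MeasureTheory.tendsto_integral_filter_of_dominated_convergence (fun _ => C)
    · exact Eventually.of_forall fun ρ =>
        ((hcont.comp (continuous_const.mul Real.continuous_sin)).mul
          Real.continuous_sin).aestronglyMeasurable
    · refine Eventually.of_forall fun ρ => ae_of_all _ fun ξ => ?_
      have h1 := hC (ρ * Real.sin ξ)
      have h2 : |Real.sin ξ| ≤ 1 := abs_le.2 ⟨Real.neg_one_le_sin ξ, Real.sin_le_one ξ⟩
      have h3 : (0:ℝ) ≤ |φ (ρ * Real.sin ξ)| := abs_nonneg _
      calc ‖φ (ρ * Real.sin ξ) * Real.sin ξ‖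
          = |φ (ρ * Real.sin ξ)| * |Real.sin ξ| := abs_mul _ _
        _ ≤ C * 1 := mul_le_mul h1 h2 (abs_nonneg _) (le_trans h3 h1)
        _ = C := mul_one C
    · exact (MeasureTheory.integrableOn_const_iff).2 (Or.inr measure_Ioc_lt_top)
    · refine ae_of_all _ fun ξ => ?_
      rcases lt_trichotomy (Real.sin ξ) 0 with h | h | h
      · have h1 : Tendsto (fun ρ : ℝ => ρ * Real.sin ξ) atTop atBot :=
          tendsto_id.atTop_mul_const_of_neg h
        have h2 := (hlim_bot.comp h1).mul_const (Real.sin ξ)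
        rw [abs_of_neg h]
        have e : φinf * -Real.sin ξ = -φinf * Real.sin ξ := by ring
        rw [e]
        exact h2
      · simp only [h, mul_zero, zero_mul, abs_zero]
        exact tendsto_const_nhds
      · have h1 : Tendsto (fun ρ : ℝ => ρ * Real.sin ξ) atTop atTop :=
          tendsto_id.atTop_mul_const h
        have h2 := (hlim.comp h1).mul_const (Real.sin ξ)
        rw [abs_of_pos h]
        exact h2
  have hfin : (∫ ξ in Set.Ioc (0:ℝ) (2 * π), φinf * |Real.sin ξ|) = φinf * 4 := by
    rw [← intervalIntegral.integral_of_le h02, intervalIntegral.integral_const_mul,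
      abs_sin_int]
  rw [hfin] at key
  have final := key.const_mul (1 / (2 * π))
  have heq : (1 / (2 * π)) * (φinf * 4) = (2 / π) * φinf := by
    field_simp; ring
  rw [heq] at final
  refine final.congr' ?_
  filter_upwards [eventually_gt_atTop (0:ℝ)] with ρ hρ
  rw [hJ ρ hρ, intervalIntegral.integral_of_le h02]
  field_simp
end
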